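/- Let α ∈ (0,1). For every b ∈ ℝ there exists a unique q ≥ 0 such that Φ(q−b) − Φ(−q−b) = 1−α; denote it q_α(b), the (1−α)-quantile of |Z+b| for Z standard normal. Then q_α is symmetric, i.e. q_α(−b) = q_α(b) for all b ∈ ℝ, and q_α is strictly increasing on [0,∞): 0 ≤ b < b' implies q_α(b) < q_α(b'). -/

import Mathlib

open MeasureTheory ProbabilityTheory
open Real Set Filter

/-- The standard normal cumulative distribution function `Φ`. -/
noncomputable def Phi (x : ℝ) : ℝ := (gaussianReal 0 1 (Set.Iic x)).toReal

noncomputable def gpdf : ℝ → ℝ := gaussianPDFReal 0 1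

lemma gpdf_integrable : Integrable gpdf := integrable_gaussianPDFReal 0 1

lemma gpdf_pos (x : ℝ) : 0 < gpdf x := gaussianPDFReal_pos 0 1 x one_ne_zero

lemma gpdf_eq (x : ℝ) : gpdf x = (√(2 * π))⁻¹ * rexp (- x^2 / 2) := by
  simp [gpdf, gaussianPDFReal]

lemma gpdf_neg (x : ℝ) : gpdf (-x) = gpdf x := by
  rw [gpdf_eq, gpdf_eq, neg_pow]; norm_num

lemma gpdf_lt {x y : ℝ} (h : |x| < |y|) : gpdf y < gpdf x := by
  rw [gpdf_eq, gpdf_eq]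
  have h2 : (0:ℝ) < (√(2 * π))⁻¹ := by
    rw [inv_pos]
    exact Real.sqrt_pos.2 (by positivity)
  apply mul_lt_mul_of_pos_left _ h2
  apply Real.exp_lt_exp.2
  have h3 := abs_nonneg x
  have h4 := mul_self_lt_mul_self (abs_nonneg x) h
  nlinarith [sq_abs x, sq_abs y]

lemma Phi_eq_integral (x : ℝ) : Phi x = ∫ t in Set.Iic x, gpdf t := by
  rw [Phi, gaussianReal_apply_eq_integral 0 one_ne_zero]
  exact ENNReal.toReal_ofReal
    (setIntegral_nonneg measurableSet_Iic fun t _ => (gpdf_pos t).le)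

lemma Phi_sub (y x : ℝ) : Phi x - Phi y = ∫ t in y..x, gpdf t := by
  rw [Phi_eq_integral, Phi_eq_integral]
  exact (intervalIntegral.integral_Iic_sub_Iic (f := gpdf) (μ := volume) (a := y) (b := x)
    gpdf_integrable.integrableOn gpdf_integrable.integrableOn)

lemma Phi_strictMono : StrictMono Phi := by
  intro y x h
  have : 0 < Phi x - Phi y := by
    rw [Phi_sub]
    exact intervalIntegral.intervalIntegral_pos_of_pos
      gpdf_integrable.intervalIntegrable gpdf_pos h
  linarith

lemma Phi_continuous : Continuous Phi := by
  have : Phi = fun x => Phi 0 + ∫ t in (0:ℝ)..x, gpdf t := by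
    ext x; rw [← Phi_sub]; ring
  rw [this]
  exact continuous_const.add (gpdf_integrable.continuous_primitive 0)

lemma Phi_eq_cdf (x : ℝ) : Phi x = cdf (gaussianReal 0 1) x := (cdf_eq_real _ x).symm

lemma Phi_tendsto_atTop : Tendsto Phi atTop (nhds 1) :=
  (tendsto_cdf_atTop (gaussianReal 0 1)).congr fun x => (Phi_eq_cdf x).symm

lemma Phi_tendsto_atBot : Tendsto Phi atBot (nhds 0) :=
  (tendsto_cdf_atBot (gaussianReal 0 1)).congr fun x => (Phi_eq_cdf x).symm

lemma Phi_neg (x : ℝ) : Phi (-x) = 1 - Phi x := by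
  have h1 : Phi (-x) = ∫ t in Set.Iic (-x), gpdf (-t) := by
    rw [Phi_eq_integral]
    exact (setIntegral_congr_fun measurableSet_Iic fun t _ => gpdf_neg t).symm
  rw [h1, integral_comp_neg_Iic]
  have h2 : (∫ t in Set.Iic x, gpdf t) + (∫ t in Set.Ioi x, gpdf t) = ∫ t, gpdf t :=
    intervalIntegral.integral_Iic_add_Ioi gpdf_integrable.integrableOn
      gpdf_integrable.integrableOn
  have h3 : (∫ t, gpdf t) = 1 := integral_gaussianPDFReal_eq_one 0 one_ne_zero
  rw [neg_neg, Phi_eq_integral]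
  linarith

/-- The two-sided probability `F b q = Φ(q-b) - Φ(-q-b)`. -/
noncomputable def Fq (b q : ℝ) : ℝ := Phi (q - b) - Phi (-q - b)

lemma Fq_strictMono (b : ℝ) : StrictMono (Fq b) := by
  intro q q' h
  have h1 : Phi (q - b) < Phi (q' - b) := Phi_strictMono (by linarith)
  have h2 : Phi (-q' - b) < Phi (-q - b) := Phi_strictMono (by linarith)
  unfold Fq; linarith

lemma Fq_zero (b : ℝ) : Fq b 0 = 0 := by simp [Fq]

lemma Fq_continuous (b : ℝ) : Continuous (Fq b) :=
  (Phi_continuous.comp (continuous_id.sub continuous_const)).sub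
    (Phi_continuous.comp ((continuous_neg).sub continuous_const))

lemma Fq_tendsto (b : ℝ) : Tendsto (Fq b) atTop (nhds 1) := by
  have h1 : Tendsto (fun q => Phi (q - b)) atTop (nhds 1) :=
    Phi_tendsto_atTop.comp (tendsto_atTop_add_const_right _ _ tendsto_id)
  have h2 : Tendsto (fun q => Phi (-q - b)) atTop (nhds 0) :=
    Phi_tendsto_atBot.comp (tendsto_atBot_add_const_right _ _ tendsto_neg_atTop_atBot)
  exact (by simpa using h1.sub h2 : Tendsto (fun q => Phi (q - b) - Phi (-q - b)) atTop (nhds 1))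

lemma Fq_neg (b q : ℝ) : Fq (-b) q = Fq b q := by
  unfold Fq
  have h1 : Phi (q - -b) = 1 - Phi (-q - b) := by
    rw [show q - -b = -(-q - b) by ring, Phi_neg]
  have h2 : Phi (-q - -b) = 1 - Phi (q - b) := by
    rw [show -q - -b = -(q - b) by ring, Phi_neg]
  rw [h1, h2]; ring

lemma Fq_exists_unique {α : ℝ} (hα : α ∈ Set.Ioo (0:ℝ) 1) (b : ℝ) :
    ∃! q : ℝ, 0 ≤ q ∧ Fq b q = 1 - α := by
  obtain ⟨hα0, hα1⟩ := hα
  have h1 : ∀ᶠ q in atTop, 1 - α < Fq b q :=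
    (Fq_tendsto b).eventually_const_lt (by linarith)
  obtain ⟨q0, hq0⟩ := h1.exists
  have hq0pos : 0 < q0 := by
    by_contra h
    push_neg at h
    have := (Fq_strictMono b).monotone h
    rw [Fq_zero] at this
    linarith
  have hIcc : Set.Icc (Fq b 0) (Fq b q0) ⊆ Fq b '' Set.Icc 0 q0 :=
    intermediate_value_Icc hq0pos.le (Fq_continuous b).continuousOn
  have hmem : (1 - α) ∈ Set.Icc (Fq b 0) (Fq b q0) := by
    rw [Fq_zero]
    exact ⟨by linarith, hq0.le⟩
  obtain ⟨q, hq, hfq⟩ := hIcc hmem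
  refine ⟨q, ⟨hq.1, hfq⟩, ?_⟩
  rintro q' ⟨hq'0, hfq'⟩
  exact (Fq_strictMono b).injective (by rw [hfq', hfq])

lemma Fq_anti {b b' q : ℝ} (hb : 0 ≤ b) (hbb : b < b') (hq : 0 < q) :
    Fq b' q < Fq b q := by
  have key : Fq b q - Fq b' q
      = (∫ t in (q - b')..(q - b), gpdf t) - ∫ t in (q + b)..(q + b'), gpdf t := by
    unfold Fq
    rw [show (∫ t in (q - b')..(q - b), gpdf t) = Phi (q - b) - Phi (q - b') from
      (Phi_sub _ _).symm]
    have : (∫ t in (q + b)..(q + b'), gpdf t) = Phi (q + b') - Phi (q + b) :=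
      (Phi_sub _ _).symm
    rw [this]
    have e1 : Phi (q + b') = 1 - Phi (-q - b') := by
      rw [show q + b' = -(-q - b') by ring, Phi_neg]
    have e2 : Phi (q + b) = 1 - Phi (-q - b) := by
      rw [show q + b = -(-q - b) by ring, Phi_neg]
    rw [e1, e2]; ring
  -- rewrite first integral by reflection, second by shift, to common interval (b-q, b'-q)
  have refl1 : (∫ t in (q - b')..(q - b), gpdf t) = ∫ t in (b - q)..(b' - q), gpdf t := by
    have h := intervalIntegral.integral_comp_neg (a := b - q) (b := b' - q) gpdf
    rw [show -(b' - q) = q - b' by ring, show -(b - q) = q - b by ring] at h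
    rw [← h]
    exact intervalIntegral.integral_congr fun t _ => (gpdf_neg t)
  have shift : (∫ t in (q + b)..(q + b'), gpdf t)
      = ∫ t in (b - q)..(b' - q), gpdf (t + 2 * q) := by
    rw [intervalIntegral.integral_comp_add_right gpdf (2 * q),
      show b - q + 2 * q = q + b by ring, show b' - q + 2 * q = q + b' by ring]
  have hlt : 0 < ∫ t in (b - q)..(b' - q), (gpdf t - gpdf (t + 2 * q)) := by
    refine intervalIntegral.intervalIntegral_pos_of_pos_on ?_ ?_ (by linarith)
    · exact (gpdf_integrable.intervalIntegrable).sub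
        ((gpdf_integrable.comp_add_right (2*q)).intervalIntegrable)
    · intro t ht
      have h1 : b - q < t := ht.1
      have h2 : t < b' - q := ht.2
      have habs : |t| < |t + 2 * q| := by
        rw [abs_of_pos (by linarith : (0:ℝ) < t + 2 * q)]
        rcases le_or_gt 0 t with h | h
        · rw [abs_of_nonneg h]; linarith
        · rw [abs_of_neg h]; linarith
      linarith [gpdf_lt habs]
  have hint : (∫ t in (b - q)..(b' - q), (gpdf t - gpdf (t + 2 * q)))
      = (∫ t in (b - q)..(b' - q), gpdf t) - ∫ t in (b - q)..(b' - q), gpdf (t + 2 * q) :=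
    intervalIntegral.integral_sub gpdf_integrable.intervalIntegrable
      ((gpdf_integrable.comp_add_right (2*q)).intervalIntegrable)
  rw [hint] at hlt
  rw [refl1, shift] at key
  linarith

/-- For `α ∈ (0,1)` and every `b ∈ ℝ` there is a unique `q ≥ 0` with
`Φ(q-b) - Φ(-q-b) = 1-α` (the `(1-α)`-quantile `q_α(b)` of `|Z+b|`, `Z` standard normal);
moreover `b ↦ q_α(b)` is symmetric and strictly increasing on `[0,∞)`. -/
theorem quantile_abs_normal_exists_symm_mono (α : ℝ) (hα : α ∈ Set.Ioo (0 : ℝ) 1) :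
    (∀ b : ℝ, ∃! q : ℝ, 0 ≤ q ∧ Phi (q - b) - Phi (-q - b) = 1 - α) ∧
    ∀ qa : ℝ → ℝ,
      (∀ b : ℝ, 0 ≤ qa b ∧ Phi (qa b - b) - Phi (-qa b - b) = 1 - α) →
      (∀ b : ℝ, qa (-b) = qa b) ∧
      (∀ b b' : ℝ, 0 ≤ b → b < b' → qa b < qa b') := by
  have hEU : ∀ b : ℝ, ∃! q : ℝ, 0 ≤ q ∧ Fq b q = 1 - α := fun b => Fq_exists_unique hα b
  refine ⟨hEU, fun qa hqa => ⟨?_, ?_⟩⟩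
  · intro b
    obtain ⟨q, hq, huniq⟩ := hEU b
    have h1 : qa (-b) = q := by
      refine huniq _ ⟨(hqa (-b)).1, ?_⟩
      rw [← Fq_neg b (qa (-b))]
      exact (hqa (-b)).2
    have h2 : qa b = q := huniq _ ⟨(hqa b).1, (hqa b).2⟩
    rw [h1, h2]
  · intro b b' hb hbb
    have hqb := hqa b
    have hqb' := hqa b'
    have hqpos : 0 < qa b := by
      rcases lt_or_eq_of_le hqb.1 with h | h
      · exact h
      · exfalso
        have h2 := hqb.2
        rw [← h] at h2
        obtain ⟨hα0, hα1⟩ := hα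
        have h3 : (0:ℝ) - b = -0 - b := by ring
        rw [h3, sub_self] at h2
        linarith
    have hlt : Fq b' (qa b) < Fq b' (qa b') := by
      calc Fq b' (qa b) < Fq b (qa b) := Fq_anti hb hbb hqpos
        _ = 1 - α := hqb.2
        _ = Fq b' (qa b') := hqb'.2.symm
    exact (Fq_strictMono b').lt_iff_lt.mp hlt
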